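/- Consider the one-dimensional discrete-time mean-variance functional J_n(u) = (μ − r)·∫_n^T u_s·e^{r(T−s)} ds − λσ²·∫_n^T u_s²·e^{2r(T−s)} ds over piecewise constant deterministic strategies u on intervals (k, k+1]. The unique time-consistent (backward-recursively) optimal strategy is û_{n+1} = (μ − r)/(λσ²) · 1/(e^{r(T−n)} + e^{r(T−n−1)}) for all n ∈ {0, ..., T−1}. -/

import Mathlib

open MeasureTheory intervalIntegral

/-- The discrete-time mean-variance functional over piecewise constant deterministic
strategies `u` (with `u (k+1)` the investment on the interval `(k, k+1]`, encoded via the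
ceiling function):
`J_n(u) = (μ−r)·∫_n^T u_s e^{r(T−s)} ds − λσ²·∫_n^T u_s² e^{2r(T−s)} ds`. -/
noncomputable def Jmv (μ r lam σ : ℝ) (T n : ℕ) (u : ℕ → ℝ) : ℝ :=
  (μ - r) * (∫ s in (n : ℝ)..(T : ℝ), u ⌈s⌉₊ * Real.exp (r * ((T : ℝ) - s)))
    - lam * σ ^ 2 * (∫ s in (n : ℝ)..(T : ℝ), (u ⌈s⌉₊) ^ 2 * Real.exp (2 * r * ((T : ℝ) - s)))

/-- The candidate optimal strategy `û_{n+1} = (μ−r)/(λσ²) · 1/(e^{r(T−n)} + e^{r(T−n−1)})`,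
here written for index `k = n+1`. -/
noncomputable def uhatMV (μ r lam σ : ℝ) (T : ℕ) (k : ℕ) : ℝ :=
  (μ - r) / (lam * σ ^ 2) *
    (1 / (Real.exp (r * ((T : ℝ) - ((k : ℝ) - 1))) + Real.exp (r * ((T : ℝ) - (k : ℝ)))))


lemma ceil_comp_intervalIntegrable (v : ℕ → ℝ) (a b : ℝ) :
    IntervalIntegrable (fun s : ℝ => v ⌈s⌉₊) volume a b := by
  have hmeas : Measurable fun s : ℝ => v ⌈s⌉₊ :=
    measurable_from_top.comp Nat.measurable_ceil
  set m : ℕ := ⌈max a b⌉₊ with hm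
  set M : ℝ := (Finset.range (m + 1)).sup' (by simp) (fun k => |v k|) with hM
  rw [intervalIntegrable_iff]
  refine Integrable.mono' (g := fun _ => M) (integrableOn_const measure_Ioc_lt_top.ne) hmeas.aestronglyMeasurable ?_
  refine (ae_restrict_iff' measurableSet_uIoc).mpr (Filter.Eventually.of_forall ?_)
  intro s hs
  have hsle : s ≤ max a b := hs.2
  have hceil : ⌈s⌉₊ ≤ m := Nat.ceil_mono hsle
  have : ⌈s⌉₊ ∈ Finset.range (m + 1) := Finset.mem_range.mpr (by omega)
  rw [Real.norm_eq_abs]; exact Finset.le_sup' (fun k => |v k|) this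


/-- the strategy `û` is the unique time-consistent (backward-recursively)
optimal strategy: at each step `n < T`, given that the strategy agrees with `û` on all later
intervals, deviating from `û_{n+1}` on `(n, n+1]` strictly decreases `J_n`. -/
theorem stmt11 (μ r lam σ : ℝ) (hr : r ≠ 0) (hσ : 0 < σ) (hlam : 0 < lam) (T : ℕ)
    (n : ℕ) (hn : n < T) (u : ℕ → ℝ)
    (hu : ∀ k, n + 2 ≤ k → u k = uhatMV μ r lam σ T k)
    (hne : u (n + 1) ≠ uhatMV μ r lam σ T (n + 1)) :
    Jmv μ r lam σ T n u
      < Jmv μ r lam σ T n (Function.update u (n + 1) (uhatMV μ r lam σ T (n + 1))) := by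
  clear hu
  set y := uhatMV μ r lam σ T (n + 1) with hy
  set u' : ℕ → ℝ := Function.update u (n + 1) y with hu'def
  set x := u (n + 1) with hx
  have hT : (n : ℝ) + 1 ≤ (T : ℝ) := by exact_mod_cast hn
  have hnn : (n : ℝ) < (n : ℝ) + 1 := by linarith
  -- integrability
  have I1 : ∀ (v : ℕ → ℝ) (c : ℝ) (p q : ℝ),
      IntervalIntegrable (fun s => v ⌈s⌉₊ * Real.exp (c * ((T : ℝ) - s))) volume p q := by
    intro v c p q
    exact (ceil_comp_intervalIntegrable v p q).mul_continuousOn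
      (Continuous.continuousOn (by fun_prop))
  -- splitting
  have hsplit : ∀ (v : ℕ → ℝ) (c : ℝ),
      (∫ s in (n : ℝ)..(T : ℝ), v ⌈s⌉₊ * Real.exp (c * ((T : ℝ) - s)))
        = (∫ s in (n : ℝ)..((n : ℝ) + 1), v ⌈s⌉₊ * Real.exp (c * ((T : ℝ) - s)))
          + ∫ s in ((n : ℝ) + 1)..(T : ℝ), v ⌈s⌉₊ * Real.exp (c * ((T : ℝ) - s)) :=
    fun v c => (integral_add_adjacent_intervals (I1 v c _ _) (I1 v c _ _)).symm
  -- tails agree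
  have htail : ∀ (v w : ℕ → ℝ) (c : ℝ), (∀ k, n + 2 ≤ k → v k = w k) →
      (∫ s in ((n : ℝ) + 1)..(T : ℝ), v ⌈s⌉₊ * Real.exp (c * ((T : ℝ) - s)))
        = ∫ s in ((n : ℝ) + 1)..(T : ℝ), w ⌈s⌉₊ * Real.exp (c * ((T : ℝ) - s)) := by
    intro v w c h
    rw [integral_of_le hT, integral_of_le hT]
    refine setIntegral_congr_fun measurableSet_Ioc (fun s hs => ?_)
    have h1 : ((n : ℕ) + 1 : ℕ) < ⌈s⌉₊ := Nat.lt_ceil.mpr (by push_cast; linarith [hs.1])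
    rw [h _ (by omega)]
  -- heads
  have hhead : ∀ (v : ℕ → ℝ) (c : ℝ),
      (∫ s in (n : ℝ)..((n : ℝ) + 1), v ⌈s⌉₊ * Real.exp (c * ((T : ℝ) - s)))
        = v (n + 1) * ∫ s in (n : ℝ)..((n : ℝ) + 1), Real.exp (c * ((T : ℝ) - s)) := by
    intro v c
    rw [← intervalIntegral.integral_const_mul, integral_of_le hnn.le, integral_of_le hnn.le]
    refine setIntegral_congr_fun measurableSet_Ioc (fun s hs => ?_)
    have hceil : ⌈s⌉₊ = n + 1 := by
      rw [Nat.ceil_eq_iff (by omega)]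
      push_cast
      exact ⟨by linarith [hs.1], hs.2⟩
    rw [hceil]
  -- exponential integral values
  have hexpint : ∀ c : ℝ, c ≠ 0 →
      (∫ s in (n : ℝ)..((n : ℝ) + 1), Real.exp (c * ((T : ℝ) - s)))
        = (Real.exp (c * ((T : ℝ) - (n : ℝ))) - Real.exp (c * ((T : ℝ) - ((n : ℝ) + 1)))) / c := by
    intro c hc
    have key : ∀ s ∈ Set.uIcc (n : ℝ) ((n : ℝ) + 1),
        HasDerivAt (fun t => -(Real.exp (c * ((T : ℝ) - t)) / c))
          (Real.exp (c * ((T : ℝ) - s))) s := by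
      intro s _
      have h1 : HasDerivAt (fun t : ℝ => c * ((T : ℝ) - t)) (-c) s := by
        simpa using ((hasDerivAt_id s).const_sub (T : ℝ)).const_mul c
      have h3 := (h1.exp.div_const c).neg
      have h4 : Real.exp (c * ((T : ℝ) - s)) = -(Real.exp (c * ((T : ℝ) - s)) * -c / c) := by
        rw [mul_neg, neg_div, neg_neg, mul_div_assoc, div_self hc, mul_one]
      rw [h4]; exact h3
    rw [integral_eq_sub_of_hasDerivAt key
      (Continuous.intervalIntegrable (by fun_prop) _ _)]
    ring
  -- positivity of B
  have hBpos : 0 < ∫ s in (n : ℝ)..((n : ℝ) + 1), Real.exp (2 * r * ((T : ℝ) - s)) :=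
    intervalIntegral_pos_of_pos (Continuous.intervalIntegrable (by fun_prop) _ _)
      (fun s => Real.exp_pos _) hnn
  set A := ∫ s in (n : ℝ)..((n : ℝ) + 1), Real.exp (r * ((T : ℝ) - s)) with hA
  set B := ∫ s in (n : ℝ)..((n : ℝ) + 1), Real.exp (2 * r * ((T : ℝ) - s)) with hB
  set t1 := ∫ s in ((n : ℝ) + 1)..(T : ℝ), u ⌈s⌉₊ * Real.exp (r * ((T : ℝ) - s)) with ht1
  set t2 := ∫ s in ((n : ℝ) + 1)..(T : ℝ), (u ⌈s⌉₊) ^ 2 * Real.exp (2 * r * ((T : ℝ) - s)) with ht2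
  have hagree : ∀ k, n + 2 ≤ k → u' k = u k := by
    intro k hk
    simp [hu'def, Function.update_of_ne (by omega : k ≠ n + 1)]
  have hagree2 : ∀ k, n + 2 ≤ k → (fun j => (u' j) ^ 2) k = (fun j => (u j) ^ 2) k := by
    intro k hk; simp [hagree k hk]
  have hJu : Jmv μ r lam σ T n u = (μ - r) * (x * A + t1) - lam * σ ^ 2 * (x ^ 2 * B + t2) := by
    rw [Jmv, hsplit u r, hsplit (fun j => (u j) ^ 2) (2 * r), hhead u r,
      hhead (fun j => (u j) ^ 2) (2 * r)]
  have hJu' : Jmv μ r lam σ T n u'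
      = (μ - r) * (y * A + t1) - lam * σ ^ 2 * (y ^ 2 * B + t2) := by
    rw [Jmv, hsplit u' r, hsplit (fun j => (u' j) ^ 2) (2 * r), hhead u' r,
      hhead (fun j => (u' j) ^ 2) (2 * r),
      htail u' u r hagree, htail (fun j => (u' j) ^ 2) (fun j => (u j) ^ 2) (2 * r) hagree2]
    simp [hu'def, hA, hB, ht1, ht2]
  -- key identity
  have hE : Real.exp (r * ((T : ℝ) - ((n : ℝ) + 1))) + Real.exp (r * ((T : ℝ) - (n : ℝ))) ≠ 0 := by
    positivity
  have hlσ : lam * σ ^ 2 ≠ 0 := by positivity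
  have hkey : (μ - r) * A = 2 * (lam * σ ^ 2) * B * y := by
    rw [hA, hB, hexpint r hr, hexpint (2 * r) (by simpa using hr), hy, uhatMV]
    have e1 : Real.exp (2 * r * ((T : ℝ) - (n : ℝ)))
        = Real.exp (r * ((T : ℝ) - (n : ℝ))) ^ 2 := by
      rw [← Real.exp_nat_mul]; ring_nf
    have e2 : Real.exp (2 * r * ((T : ℝ) - ((n : ℝ) + 1)))
        = Real.exp (r * ((T : ℝ) - ((n : ℝ) + 1))) ^ 2 := by
      rw [← Real.exp_nat_mul]; ring_nf
    have e3 : ((T : ℝ) - (((n : ℕ) + 1 : ℕ) : ℝ)) = (T : ℝ) - ((n : ℝ) + 1) := by push_cast; ring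
    have e4 : ((T : ℝ) - ((((n : ℕ) + 1 : ℕ) : ℝ) - 1)) = (T : ℝ) - (n : ℝ) := by push_cast; ring
    rw [e1, e2, e3, e4]
    field_simp
    ring
  have hLB : 0 < lam * σ ^ 2 * B := by positivity
  have hsq : 0 < (y - x) ^ 2 := by
    have : y - x ≠ 0 := sub_ne_zero.mpr (Ne.symm hne)
    positivity
  have heq : ((μ - r) * (y * A + t1) - lam * σ ^ 2 * (y ^ 2 * B + t2))
      - ((μ - r) * (x * A + t1) - lam * σ ^ 2 * (x ^ 2 * B + t2))
      = lam * σ ^ 2 * B * (y - x) ^ 2 := by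
    linear_combination (y - x) * hkey
  rw [hJu, hJu']
  linarith [heq, mul_pos hLB hsq]
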